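/- With the same setup as the previous statement, and additionally defining Λ ≥ 1 with λ ≥ Λ^{-1}, and assuming |φ(v')| ≤ Λ sup_{v'' ∈ [u,v']} |(rφ)'(v'')| for all v' ∈ [u,v], one has μ(v)/r(v) ≤ Λ² · (sup_{v' ∈ [u,v]} |(rφ)'(v')|) · (sup_{v' ∈ [u,v]} |φ'(v')|). -/

import Mathlib

open Set MeasureTheory Filter

lemma slope_abs_deriv_le {f : ℝ → ℝ} {s : Set ℝ} {x : ℝ} (hx : x ∈ s)
    (hne : (nhdsWithin x (s \ {x})).NeBot) {C : ℝ} (hC0 : 0 ≤ C)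
    (hC : ∀ y ∈ s, |f y - f x| ≤ C * |y - x|) : |deriv f x| ≤ C := by
  by_cases hd : DifferentiableAt ℝ f x
  · have h1 : Tendsto (slope f x) (nhdsWithin x (s \ {x})) (nhds (deriv f x)) :=
      hasDerivWithinAt_iff_tendsto_slope.mp (hd.hasDerivAt.hasDerivWithinAt)
    have h2 : Tendsto (fun y => |slope f x y|) (nhdsWithin x (s \ {x})) (nhds |deriv f x|) :=
      h1.abs
    refine le_of_tendsto h2 ?_
    filter_upwards [self_mem_nhdsWithin] with y hy
    have hyx : y ≠ x := fun h => hy.2 (by simp [h])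
    have hxy : y - x ≠ 0 := sub_ne_zero.mpr hyx
    rw [slope_def_field, div_eq_mul_inv, ← div_eq_mul_inv, abs_div,
      div_le_iff₀ (abs_pos.mpr hxy)]
    exact hC y hy.1
  · simpa [deriv_zero_of_not_differentiableAt hd] using hC0

lemma icc_nhdsWithin_neBot {u v x : ℝ} (huv : u < v) (hx : x ∈ Icc u v) :
    (nhdsWithin x (Icc u v \ {x})).NeBot := by
  rcases lt_or_eq_of_le hx.2 with h | h
  · have hsub : Ioo x v ⊆ Icc u v \ {x} := fun y hy =>
      ⟨⟨hx.1.trans hy.1.le, hy.2.le⟩, fun hh => absurd (by simpa using hh) (ne_of_gt hy.1)⟩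
    have h1 : (nhdsWithin x (Ioo x v)).NeBot := by
      rw [← mem_closure_iff_nhdsWithin_neBot, closure_Ioo (ne_of_lt h)]
      exact ⟨le_rfl, h.le⟩
    exact h1.mono (nhdsWithin_mono x hsub)
  · have hux : u < x := h ▸ huv
    have hsub : Ioo u x ⊆ Icc u v \ {x} := fun y hy =>
      ⟨⟨hy.1.le, hy.2.le.trans hx.2⟩, fun hh => absurd (by simpa using hh) (ne_of_lt hy.2)⟩
    have h1 : (nhdsWithin x (Ioo u x)).NeBot := by
      rw [← mem_closure_iff_nhdsWithin_neBot, closure_Ioo hux.ne]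
      exact ⟨hux.le, le_rfl⟩
    exact h1.mono (nhdsWithin_mono x hsub)

lemma real_biSup_le {s : Set ℝ} {f : ℝ → ℝ} {C : ℝ} (hC : 0 ≤ C)
    (hb : ∀ x ∈ s, f x ≤ C) : (⨆ x ∈ s, f x) ≤ C :=
  Real.iSup_le (fun x => Real.iSup_le (fun hx => hb x hx) hC) hC

lemma real_biSup_ge {s : Set ℝ} {f : ℝ → ℝ} {C : ℝ} (hC : 0 ≤ C)
    (hb : ∀ x ∈ s, f x ≤ C) {t : ℝ} (ht : t ∈ s) : f t ≤ ⨆ x ∈ s, f x := by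
  have hb' : BddAbove (Set.range fun x => ⨆ _ : x ∈ s, f x) := by
    refine ⟨C, ?_⟩
    rintro _ ⟨x, rfl⟩
    exact Real.iSup_le (fun hx => hb x hx) hC
  calc f t = ⨆ _ : t ∈ s, f t := by
        haveI : Nonempty (t ∈ s) := ⟨ht⟩
        rw [ciSup_const]
    _ ≤ ⨆ x ∈ s, f x := le_ciSup hb' t

/-- Bound for the Hawking mass ratio `μ/r` near the axis in terms of
`sup |(rφ)'|` and `sup |φ'|`. -/
theorem stmt_6 (u v : ℝ) (huv : u ≤ v) (r φ m : ℝ → ℝ) (Kr Kφ : NNReal)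
    (hr : LipschitzOnWith Kr r (Icc u v)) (hmono : MonotoneOn r (Icc u v))
    (hr0 : r u = 0) (hφ : LipschitzOnWith Kφ φ (Icc u v))
    (hlam0 : ∀ x ∈ Icc u v, 0 < deriv r x)
    (hm : ∀ x ∈ Icc u v, m x =
      (1/2) * ∫ t in u..x,
        (1 - 2 * m t / r t) * (deriv r t)⁻¹ * (r t)^2 * (deriv φ t)^2)
    (hμ : ∀ x ∈ Icc u v, 0 ≤ 1 - 2 * m x / r x ∧ 1 - 2 * m x / r x ≤ 1)
    (Λ : ℝ) (hΛ : 1 ≤ Λ)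
    (hlamlb : ∀ x ∈ Icc u v, Λ⁻¹ ≤ deriv r x)
    (hφbound : ∀ v' ∈ Icc u v,
      |φ v'| ≤ Λ * ⨆ v'' ∈ Icc u v', |deriv (fun x => r x * φ x) v''|) :
    (2 * m v / r v) / r v ≤
      Λ^2 * (⨆ v' ∈ Icc u v, |deriv (fun x => r x * φ x) v'|) *
        ⨆ v' ∈ Icc u v, |deriv φ v'| := by
  have hu_mem : u ∈ Icc u v := ⟨le_rfl, huv⟩
  have hv_mem : v ∈ Icc u v := ⟨huv, le_rfl⟩
  set S := ⨆ v' ∈ Icc u v, |deriv (fun x => r x * φ x) v'| with hSdef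
  set T := ⨆ v' ∈ Icc u v, |deriv φ v'| with hTdef
  have hS0 : 0 ≤ S := Real.iSup_nonneg fun v' => Real.iSup_nonneg fun _ => abs_nonneg _
  have hT0 : 0 ≤ T := Real.iSup_nonneg fun v' => Real.iSup_nonneg fun _ => abs_nonneg _
  have hL0 : (0:ℝ) < Λ := lt_of_lt_of_le one_pos hΛ
  have hRHS0 : 0 ≤ Λ^2 * S * T := by positivity
  rcases eq_or_lt_of_le huv with heq | hlt
  · have hrv : r v = 0 := heq ▸ hr0
    rw [hrv]
    simpa using hRHS0
  -- now u < v
  have hicc : ∀ x ∈ Icc u v, (nhdsWithin x (Icc u v \ {x})).NeBot :=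
    fun x hx => icc_nhdsWithin_neBot hlt hx
  have hr_nonneg : ∀ x ∈ Icc u v, 0 ≤ r x := fun x hx => hr0 ▸ hmono hu_mem hx hx.1
  have hr_le : ∀ x ∈ Icc u v, r x ≤ r v := fun x hx => hmono hx hv_mem hx.2
  have hrv_pos : 0 < r v := by
    have hsm : StrictMonoOn r (Icc u v) := by
      apply strictMonoOn_of_deriv_pos (convex_Icc u v) hr.continuousOn
      exact fun x hx => hlam0 x (interior_subset hx)
    have := hsm hu_mem hv_mem hlt
    rwa [hr0] at this
  obtain ⟨Cφ, hCφ0, hCφ⟩ : ∃ C, 0 ≤ C ∧ ∀ x ∈ Icc u v, |φ x| ≤ C := by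
    obtain ⟨C, hC⟩ := (isCompact_Icc).exists_bound_of_continuousOn hφ.continuousOn
    refine ⟨C, ?_, fun x hx => by simpa using hC x hx⟩
    exact le_trans (abs_nonneg _) (by simpa using hC u hu_mem)
  have hlipφ : ∀ y ∈ Icc u v, ∀ x ∈ Icc u v, |φ y - φ x| ≤ (Kφ:ℝ) * |y - x| := by
    intro y hy x hx
    have := hφ.dist_le_mul y hy x hx
    simpa [Real.dist_eq] using this
  have hlipr : ∀ y ∈ Icc u v, ∀ x ∈ Icc u v, |r y - r x| ≤ (Kr:ℝ) * |y - x| := by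
    intro y hy x hx
    have := hr.dist_le_mul y hy x hx
    simpa [Real.dist_eq] using this
  have hKφb : ∀ x ∈ Icc u v, |deriv φ x| ≤ (Kφ:ℝ) := by
    intro x hx
    exact slope_abs_deriv_le hx (hicc x hx) Kφ.coe_nonneg (fun y hy => hlipφ y hy x hx)
  have hKrb : ∀ x ∈ Icc u v, |deriv r x| ≤ (Kr:ℝ) := by
    intro x hx
    exact slope_abs_deriv_le hx (hicc x hx) Kr.coe_nonneg (fun y hy => hlipr y hy x hx)
  set Crφ : ℝ := r v * (Kφ:ℝ) + Cφ * (Kr:ℝ) with hCrφdef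
  have hCrφ0 : 0 ≤ Crφ :=
    add_nonneg (mul_nonneg hrv_pos.le Kφ.coe_nonneg) (mul_nonneg hCφ0 Kr.coe_nonneg)
  have hKrφb : ∀ x ∈ Icc u v, |deriv (fun x => r x * φ x) x| ≤ Crφ := by
    intro x hx
    refine slope_abs_deriv_le hx (hicc x hx) hCrφ0 ?_
    intro y hy
    have h1 : r y * φ y - r x * φ x = r y * (φ y - φ x) + φ x * (r y - r x) := by ring
    calc |r y * φ y - r x * φ x|
        = |r y * (φ y - φ x) + φ x * (r y - r x)| := by rw [h1]
      _ ≤ |r y * (φ y - φ x)| + |φ x * (r y - r x)| := abs_add_le _ _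
      _ = |r y| * |φ y - φ x| + |φ x| * |r y - r x| := by rw [abs_mul, abs_mul]
      _ ≤ r v * ((Kφ:ℝ) * |y - x|) + Cφ * ((Kr:ℝ) * |y - x|) := by
          apply add_le_add
          · apply mul_le_mul ?_ (hlipφ y hy x hx) (abs_nonneg _) hrv_pos.le
            rw [abs_of_nonneg (hr_nonneg y hy)]; exact hr_le y hy
          · exact mul_le_mul (hCφ x hx) (hlipr y hy x hx) (abs_nonneg _) hCφ0
      _ = Crφ * |y - x| := by rw [hCrφdef]; ring
  have hbS : ∀ t ∈ Icc u v, |deriv (fun x => r x * φ x) t| ≤ S :=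
    fun t ht => real_biSup_ge hCrφ0 hKrφb ht
  have hbT : ∀ t ∈ Icc u v, |deriv φ t| ≤ T :=
    fun t ht => real_biSup_ge Kφ.coe_nonneg hKφb ht
  have hsub_sup : ∀ t ∈ Icc u v,
      (⨆ v'' ∈ Icc u t, |deriv (fun x => r x * φ x) v''|) ≤ S := by
    intro t ht
    refine Real.iSup_le (fun x => Real.iSup_le (fun hx => ?_) hS0) hS0
    exact hbS x ⟨hx.1, hx.2.trans ht.2⟩
  set f : ℝ → ℝ :=
    fun t => (1 - 2 * m t / r t) * (deriv r t)⁻¹ * (r t)^2 * (deriv φ t)^2 with hfdef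
  set g : ℝ → ℝ := fun t => (2 * Λ^2 * S * T) * (r t * deriv r t) with hgdef
  have h2ΛS0 : (0:ℝ) ≤ 2 * Λ * S := by
    have := mul_nonneg (by positivity : (0:ℝ) ≤ 2 * Λ) hS0
    linarith [this]
  have hg0 : ∀ t ∈ Icc u v, 0 ≤ g t := by
    intro t ht
    have h1 := hr_nonneg t ht
    have h2 := (hlam0 t ht).le
    have h3 : (0:ℝ) ≤ 2 * Λ^2 * S * T :=
      mul_nonneg (mul_nonneg (by positivity) hS0) hT0
    exact mul_nonneg h3 (mul_nonneg h1 h2)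
  have hpt : ∀ t ∈ Icc u v, f t ≤ g t := by
    intro t ht
    by_cases hφd : DifferentiableAt ℝ φ t
    · have hlam := hlam0 t ht
      have hlamlb2 := hlamlb t ht
      have hrt := hr_nonneg t ht
      have hlaminv : (deriv r t)⁻¹ ≤ Λ := by
        have h1 : (deriv r t)⁻¹ ≤ (Λ⁻¹)⁻¹ := by
          apply inv_anti₀ (inv_pos.mpr hL0) hlamlb2
        rwa [inv_inv] at h1
      have hrd : DifferentiableAt ℝ r t := differentiableAt_of_deriv_ne_zero hlam.ne'
      have hprod : deriv (fun x => r x * φ x) t = deriv r t * φ t + r t * deriv φ t :=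
        (hrd.hasDerivAt.mul hφd.hasDerivAt).deriv
      have hA : |(deriv r t)⁻¹ * (r t * deriv φ t)| ≤ 2 * Λ * S := by
        have hkey : (deriv r t)⁻¹ * (r t * deriv φ t)
            = (deriv r t)⁻¹ * deriv (fun x => r x * φ x) t - φ t := by
          rw [hprod]
          field_simp
          ring
        rw [hkey]
        have h1 : |(deriv r t)⁻¹ * deriv (fun x => r x * φ x) t| ≤ Λ * S := by
          rw [abs_mul, abs_of_pos (inv_pos.mpr hlam)]
          exact mul_le_mul hlaminv (hbS t ht) (abs_nonneg _) hL0.le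
        have h2 : |φ t| ≤ Λ * S :=
          (hφbound t ht).trans (mul_le_mul_of_nonneg_left (hsub_sup t ht) hL0.le)
        set X := (deriv r t)⁻¹ * deriv (fun x => r x * φ x) t
        calc |X - φ t| = |X + -(φ t)| := by rw [sub_eq_add_neg]
          _ ≤ |X| + |-(φ t)| := abs_add_le _ _
          _ = |X| + |φ t| := by rw [abs_neg]
          _ ≤ 2 * Λ * S := by linarith
      have hT' : |deriv φ t| ≤ T := hbT t ht
      have hμt := hμ t ht
      have hX : (deriv r t)⁻¹ * (r t)^2 * (deriv φ t)^2 ≤ (2*Λ*S) * (r t * T) := by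
        have heq : (deriv r t)⁻¹ * (r t)^2 * (deriv φ t)^2
            = ((deriv r t)⁻¹ * (r t * deriv φ t)) * (r t * deriv φ t) := by ring
        rw [heq]
        calc ((deriv r t)⁻¹ * (r t * deriv φ t)) * (r t * deriv φ t)
            ≤ |((deriv r t)⁻¹ * (r t * deriv φ t)) * (r t * deriv φ t)| := le_abs_self _
          _ = |(deriv r t)⁻¹ * (r t * deriv φ t)| * (|r t| * |deriv φ t|) := by
              simp only [abs_mul]
          _ ≤ (2*Λ*S) * (r t * T) := by
              apply mul_le_mul hA ?_ (by positivity) h2ΛS0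
              rw [abs_of_nonneg hrt]
              exact mul_le_mul_of_nonneg_left hT' hrt
      have hmu1 : f t ≤ (deriv r t)⁻¹ * (r t)^2 * (deriv φ t)^2 := by
        have hx0 : 0 ≤ (deriv r t)⁻¹ * (r t)^2 * (deriv φ t)^2 := by positivity
        have hfe : f t = (1 - 2*m t/r t) * ((deriv r t)⁻¹ * (r t)^2 * (deriv φ t)^2) := by
          rw [hfdef]; ring
        rw [hfe]
        nlinarith [mul_nonneg (sub_nonneg.mpr hμt.2) hx0]
      have h1Ll : (1:ℝ) ≤ Λ * deriv r t := by
        rw [← mul_inv_cancel₀ hL0.ne']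
        exact mul_le_mul_of_nonneg_left hlamlb2 hL0.le
      have hrΛ : r t ≤ Λ * deriv r t * r t := by
        nlinarith [mul_le_mul_of_nonneg_right h1Ll hrt]
      calc f t ≤ (deriv r t)⁻¹ * (r t)^2 * (deriv φ t)^2 := hmu1
        _ ≤ (2*Λ*S) * (r t * T) := hX
        _ ≤ (2*Λ*S) * ((Λ * deriv r t * r t) * T) := by
            apply mul_le_mul_of_nonneg_left ?_ h2ΛS0
            exact mul_le_mul_of_nonneg_right hrΛ hT0
        _ = g t := by rw [hgdef]; ring
    · have hd0 : deriv φ t = 0 := deriv_zero_of_not_differentiableAt hφd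
      have hf0 : f t = 0 := by rw [hfdef]; simp [hd0]
      rw [hf0]
      exact hg0 t ht
  by_cases hfint : IntervalIntegrable f volume u v
  · have hgmeas : AEStronglyMeasurable (fun t => r t * deriv r t)
        (volume.restrict (Ioc u v)) :=
      ((hr.continuousOn.mono Ioc_subset_Icc_self).aestronglyMeasurable
        measurableSet_Ioc).mul (measurable_deriv r).aestronglyMeasurable
    have hgint1 : IntervalIntegrable (fun t => r t * deriv r t) volume u v := by
      rw [intervalIntegrable_iff_integrableOn_Ioc_of_le huv]
      refine Integrable.mono' (integrable_const (r v * (Kr:ℝ))) hgmeas ?_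
      filter_upwards [ae_restrict_mem measurableSet_Ioc] with t ht
      have ht' : t ∈ Icc u v := Ioc_subset_Icc_self ht
      have h1 := hr_nonneg t ht'
      have h2 := (hlam0 t ht').le
      have h4 : deriv r t ≤ (Kr:ℝ) := by
        have := hKrb t ht'
        rwa [abs_of_nonneg h2] at this
      rw [Real.norm_eq_abs, abs_of_nonneg (mul_nonneg h1 h2)]
      exact mul_le_mul (hr_le t ht') h4 h2 (hr_nonneg v hv_mem)
    have hgint : IntervalIntegrable g volume u v := by
      rw [hgdef]
      exact hgint1.const_mul _
    have hftc : (∫ t in u..v, r t * deriv r t) = (r v)^2/2 := by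
      have hders : ∀ t ∈ uIcc u v, HasDerivAt (fun x => r x^2/2) (r t * deriv r t) t := by
        intro t ht
        rw [uIcc_of_le huv] at ht
        have hrd : DifferentiableAt ℝ r t := differentiableAt_of_deriv_ne_zero (hlam0 t ht).ne'
        have h2 : HasDerivAt (fun x => r x ^ 2 / 2) (((2:ℕ):ℝ) * r t ^ (2 - 1) * deriv r t / 2) t :=
          (hrd.hasDerivAt.pow 2).div_const 2
        convert h2 using 1
        push_cast
        ring
      have := intervalIntegral.integral_eq_sub_of_hasDerivAt hders hgint1
      rw [this, hr0]
      ring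
    have hgval : (∫ t in u..v, g t) = Λ^2 * S * T * ((r v) * (r v)) := by
      rw [hgdef]
      rw [intervalIntegral.integral_const_mul, hftc]
      ring
    have hfle : (∫ t in u..v, f t) ≤ Λ^2 * S * T * ((r v) * (r v)) := by
      rw [← hgval]
      exact intervalIntegral.integral_mono_on huv hfint hgint hpt
    have hmv : m v = (1/2) * ∫ t in u..v, f t := by
      simp only [hfdef]
      exact hm v hv_mem
    rw [hmv, div_div, div_le_iff₀ (by positivity : (0:ℝ) < r v * r v)]
    calc 2 * ((1/2) * ∫ t in u..v, f t) = ∫ t in u..v, f t := by ring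
      _ ≤ Λ^2 * S * T * ((r v) * (r v)) := hfle
  · have hmv : m v = 0 := by
      have hmv1 : m v = (1/2) * ∫ t in u..v, f t := by
        simp only [hfdef]
        exact hm v hv_mem
      rw [hmv1, intervalIntegral.integral_undef hfint]
      ring
    rw [hmv]
    simpa using hRHS0
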